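/- For every n ≥ 2 and every integer k with 0 ≤ k ≤ 2√n, one has e^n/(28√n) ≤ n^{n-k}/(n-k)! ≤ e^n/√((8π/5)·n). -/

import Mathlib

set_option maxHeartbeats 1000000

open Real Finset Nat

private lemma stirling_seq_ge (n : ℕ) (hn : 1 ≤ n) : Real.sqrt π ≤ Stirling.stirlingSeq n := by
  obtain ⟨m, rfl⟩ := Nat.exists_eq_add_of_le hn
  have ht : Filter.Tendsto (Stirling.stirlingSeq ∘ Nat.succ) Filter.atTop (nhds (Real.sqrt π)) :=
    Stirling.tendsto_stirlingSeq_sqrt_pi.comp (Filter.tendsto_add_atTop_nat 1)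
  have h2 : ∀ b ≥ m, (Stirling.stirlingSeq ∘ Nat.succ) b ≤ (Stirling.stirlingSeq ∘ Nat.succ) m :=
    fun b hb => Stirling.stirlingSeq'_antitone hb
  have := le_of_tendsto ht (Filter.eventually_atTop.mpr ⟨m, h2⟩)
  simpa [Nat.add_comm, Nat.succ_eq_add_one] using this

private lemma stirling_seq_le (n : ℕ) (hn : 1 ≤ n) :
    Stirling.stirlingSeq n ≤ Real.exp 1 / Real.sqrt 2 := by
  obtain ⟨m, rfl⟩ := Nat.exists_eq_add_of_le hn
  have h2 : (Stirling.stirlingSeq ∘ Nat.succ) m ≤ (Stirling.stirlingSeq ∘ Nat.succ) 0 :=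
    Stirling.stirlingSeq'_antitone (Nat.zero_le m)
  simpa [Nat.add_comm, Nat.succ_eq_add_one, Stirling.stirlingSeq_one] using h2

private lemma fact_eq (n : ℕ) (hn : 1 ≤ n) :
    (n ! : ℝ) = Stirling.stirlingSeq n * (Real.sqrt (2*n) * ((n:ℝ)/Real.exp 1)^n) := by
  have h0 : (0:ℝ) < n := by exact_mod_cast hn
  rw [Stirling.stirlingSeq, div_mul_cancel₀]
  positivity

private lemma stirling_lb (n : ℕ) (hn : 1 ≤ n) :
    Real.sqrt π * (Real.sqrt (2*n) * ((n:ℝ)/Real.exp 1)^n) ≤ (n ! : ℝ) := by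
  have h0 : (0:ℝ) < n := by exact_mod_cast hn
  rw [fact_eq n hn]
  have hpos : (0:ℝ) ≤ Real.sqrt (2*n) * ((n:ℝ)/Real.exp 1)^n := by positivity
  exact mul_le_mul_of_nonneg_right (stirling_seq_ge n hn) hpos

private lemma stirling_ub (n : ℕ) (hn : 1 ≤ n) :
    (n ! : ℝ) ≤ Real.exp 1 * Real.sqrt n * ((n:ℝ)/Real.exp 1)^n := by
  have h0 : (0:ℝ) < n := by exact_mod_cast hn
  rw [fact_eq n hn]
  have hpos : (0:ℝ) ≤ Real.sqrt (2*n) * ((n:ℝ)/Real.exp 1)^n := by positivity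
  have := mul_le_mul_of_nonneg_right (stirling_seq_le n hn) hpos
  refine this.trans (le_of_eq ?_)
  rw [Real.sqrt_mul (by norm_num : (0:ℝ) ≤ 2)]
  have h2 : Real.sqrt 2 ≠ 0 := by positivity
  field_simp

private lemma pow_div_fact_mono (n : ℕ) : ∀ b, b ≤ n → ∀ a, a ≤ b →
    (n:ℝ)^a/(a !) ≤ (n:ℝ)^b/(b !) := by
  intro b
  induction b with
  | zero => intro _ a ha; interval_cases a; simp
  | succ c ih =>
    intro hbn a ha
    rcases Nat.lt_or_ge a (c+1) with h | h
    · have h1 := ih (le_trans (Nat.le_succ c) hbn) a (Nat.lt_succ_iff.mp h)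
      refine h1.trans ?_
      rw [div_le_div_iff₀ (by positivity) (by positivity)]
      have hc : ((c+1 : ℕ):ℝ) ≤ (n:ℝ) := by exact_mod_cast hbn
      have hf : (0:ℝ) < (c ! : ℝ) := by exact_mod_cast Nat.factorial_pos c
      calc (n:ℝ)^c * ((c+1)! : ℝ) = (n:ℝ)^c * (c ! : ℝ) * ((c:ℝ)+1) := by
            push_cast [Nat.factorial_succ]; ring
        _ ≤ (n:ℝ)^c * (c ! : ℝ) * (n:ℝ) := by
            refine mul_le_mul_of_nonneg_left ?_ (by positivity)
            push_cast at hc; linarith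
        _ = (n:ℝ)^(c+1) * (c ! : ℝ) := by ring
    · have : a = c+1 := le_antisymm ha h
      subst this; exact le_refl _
      
private lemma exp_le_inv_one_sub {x : ℝ} (h1 : x < 1) : Real.exp x ≤ 1/(1-x) := by
  have h2 : 1 - x ≤ Real.exp (-x) := by linarith [Real.add_one_le_exp (-x)]
  rw [Real.exp_neg] at h2
  rw [le_inv_comm₀] at h2
  · simpa [one_div] using h2
  · linarith
  · exact Real.exp_pos x

private lemma exp_3310 : Real.exp (33/10 : ℝ) ≤ 28 := by
  have h1 : Real.exp (33/10 : ℝ) = Real.exp (11/10 : ℝ)^(3:ℕ) := by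
    rw [← Real.exp_nat_mul]; norm_num
  have h2 : Real.exp (11/10 : ℝ) = Real.exp 1 * Real.exp (1/10 : ℝ) := by
    rw [← Real.exp_add]; norm_num
  have h3 : Real.exp (1/10 : ℝ) ≤ 10/9 := by
    have := exp_le_inv_one_sub (show (1/10 : ℝ) < 1 by norm_num)
    calc Real.exp (1/10:ℝ) ≤ 1/(1-1/10) := this
      _ = 10/9 := by norm_num
  have h4 : Real.exp 1 ≤ 2.7182818286 := Real.exp_one_lt_d9.le
  have h5 : Real.exp (11/10 : ℝ) ≤ 2.7182818286 * (10/9) := by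
    rw [h2]; exact mul_le_mul h4 h3 (Real.exp_pos _).le (by norm_num)
  rw [h1]
  calc Real.exp (11/10:ℝ)^(3:ℕ) ≤ (2.7182818286 * (10/9))^(3:ℕ) := by
        exact pow_le_pow_left₀ (Real.exp_pos _).le h5 3
    _ ≤ 28 := by norm_num

private lemma pow_div_fact_mono' (n a b : ℕ) (hab : a ≤ b) (hbn : b ≤ n) :
    (n:ℝ)^a/(a !) ≤ (n:ℝ)^b/(b !) := pow_div_fact_mono n b hbn a hab

private lemma small_lower (n M : ℕ) (hn : 1 ≤ n)
    (h : (2.7182818286:ℝ)^(2*n) ≤ 784 * n * ((n:ℝ)^M/(M !))^2) :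
    Real.exp n / (28*Real.sqrt n) ≤ (n:ℝ)^M/(M !) := by
  set c : ℝ := 2.7182818286 with hc
  have hn0 : (0:ℝ) < n := by exact_mod_cast hn
  have hA : (0:ℝ) < (n:ℝ)^M/(M !) := by
    have := Nat.factorial_pos M
    have : (0:ℝ) < (M ! : ℝ) := by exact_mod_cast this
    positivity
  set A : ℝ := (n:ℝ)^M/(M !) with hA'
  have hsq : (0:ℝ) < Real.sqrt n := Real.sqrt_pos.mpr hn0
  rw [div_le_iff₀ (by positivity)]
  have h1 : Real.exp n ≤ c^n := by
    rw [← Real.exp_one_pow]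
    exact pow_le_pow_left₀ (Real.exp_pos 1).le Real.exp_one_lt_d9.le n
  refine h1.trans ?_
  have h2 : (c^n)^2 ≤ (A * (28 * Real.sqrt n))^2 := by
    have e1 : (A * (28 * Real.sqrt n))^2 = 784 * n * A^2 := by
      rw [mul_pow, mul_pow, Real.sq_sqrt hn0.le]; ring
    rw [e1, ← pow_mul]
    calc c^(n*2) = c^(2*n) := by ring_nf
      _ ≤ 784 * n * A^2 := h
  have hcpos : (0:ℝ) ≤ c^n := by positivity
  have hrpos : (0:ℝ) ≤ A * (28 * Real.sqrt n) := by positivity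
  have := Real.sqrt_le_sqrt h2
  rwa [Real.sqrt_sq hcpos, Real.sqrt_sq hrpos] at this

private lemma small_case (n K k : ℕ) (hkK : k ≤ K) (hn : 1 ≤ n)
    (hnum : (2.7182818286:ℝ)^(2*n) ≤ 784 * n * ((n:ℝ)^(n-K)/((n-K)!))^2) :
    Real.exp n / (28*Real.sqrt n) ≤ (n:ℝ)^(n-k)/((n-k)!) :=
  (small_lower n (n-K) hn hnum).trans
    (pow_div_fact_mono' n (n-K) (n-k) (Nat.sub_le_sub_left hkK n) (Nat.sub_le n k))

private lemma k_le_of_sq (k K : ℕ) {C : ℕ} (h : k*k ≤ C) (h2 : C < (K+1)*(K+1)) : k ≤ K := by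
  nlinarith


private lemma poly_key (N K : ℝ) (hK0 : 0 ≤ K) (hK2 : K^2 ≤ 4*N) (h4K : 4*K ≤ N)
    (hN : (64:ℝ) ≤ N) : 6*K^2*N^3 + 2*K^3*N^2 + K^4*N + 15*K^5 ≤ (138/5)*N^4 := by
  have hNpos : (0:ℝ) < N := by linarith
  have a1 : K^2*N^3 ≤ 4*N^4 := by nlinarith [pow_pos hNpos 3]
  have a2 : K^3*N^2 ≤ N^4 := by
    calc K^3*N^2 = K*(K^2*N^2) := by ring
      _ ≤ K*(4*N*N^2) := by
          refine mul_le_mul_of_nonneg_left ?_ hK0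
          nlinarith [pow_pos hNpos 2]
      _ = (4*K)*N^3 := by ring
      _ ≤ N*N^3 := mul_le_mul_of_nonneg_right h4K (by positivity)
      _ = N^4 := by ring
  have b2 : K^4 ≤ 16*N^2 := by nlinarith [sq_nonneg K, sq_nonneg (K^2 - 4*N)]
  have a3 : K^4*N ≤ N^4/4 := by
    calc K^4*N ≤ 16*N^2*N := mul_le_mul_of_nonneg_right b2 hNpos.le
      _ = 16*N^3 := by ring
      _ ≤ N^4/4 := by nlinarith [mul_nonneg (mul_nonneg (mul_nonneg hNpos.le hNpos.le) hNpos.le) (show (0:ℝ) ≤ N - 64 by linarith)]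
  have a4 : K^5 ≤ N^4/16 := by
    calc K^5 = K^4*K := by ring
      _ ≤ (16*N^2)*K := mul_le_mul_of_nonneg_right b2 hK0
      _ = 4*N^2*(4*K) := by ring
      _ ≤ 4*N^2*N := by
          refine mul_le_mul_of_nonneg_left h4K (by positivity)
      _ = 4*N^3 := by ring
      _ ≤ N^4/16 := by nlinarith [mul_nonneg (mul_nonneg (mul_nonneg hNpos.le hNpos.le) hNpos.le) (show (0:ℝ) ≤ N - 64 by linarith)]
  nlinarith [a1, a2, a3, a4]

private lemma heq_aux (N K : ℝ) (hN : 0 < N) (hM : 0 < N - K) :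
    K + (N-K)*(-((K/N) + (K/N)^2/2 + (K/N)^3/3 + (K/N)^4/4) + (K/N)^5/(1-K/N)) =
    (6*K^2*N^3 + 2*K^3*N^2 + K^4*N + 15*K^5)/(12*N^4) := by
  have h1 : 1 - K/N = (N-K)/N := by field_simp
  rw [h1]
  field_simp
  ring

private lemma log_key (N K : ℝ) (hK0 : 0 ≤ K) (hK2 : K^2 ≤ 4*N) (h4K : 4*K ≤ N)
    (hN : (64:ℝ) ≤ N) : K + (N-K) * Real.log ((N-K)/N) ≤ 23/10 := by
  have hNpos : (0:ℝ) < N := by linarith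
  have hMpos : (0:ℝ) < N - K := by linarith
  set t : ℝ := K/N with ht'
  have ht0 : 0 ≤ t := div_nonneg hK0 hNpos.le
  have ht4 : t ≤ 1/4 := by rw [ht', div_le_iff₀ hNpos]; linarith
  have h1t : 1 - t = (N-K)/N := by rw [ht']; field_simp
  have habs : |t| < 1 := by rw [abs_of_nonneg ht0]; linarith
  have hlog : Real.log (1 - t) ≤ -(t + t^2/2 + t^3/3 + t^4/4) + t^5/(1-t) := by
    have h := Real.abs_log_sub_add_sum_range_le habs 4
    rw [abs_of_nonneg ht0] at h
    simp only [Finset.sum_range_succ, Finset.sum_range_zero] at h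
    have h2 := (abs_le.mp h).2
    norm_num at h2
    linarith
  have h1 : (N-K) * Real.log ((N-K)/N) ≤ (N-K)*(-(t + t^2/2 + t^3/3 + t^4/4) + t^5/(1-t)) := by
    rw [← h1t]
    exact mul_le_mul_of_nonneg_left hlog hMpos.le
  have h2 : K + (N-K)*(-(t + t^2/2 + t^3/3 + t^4/4) + t^5/(1-t)) ≤ 23/10 := by
    rw [ht', heq_aux N K hNpos hMpos, div_le_iff₀ (by positivity)]
    calc 6*K^2*N^3 + 2*K^3*N^2 + K^4*N + 15*K^5 ≤ (138/5)*N^4 :=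
          poly_key N K hK0 hK2 h4K hN
      _ = 23/10*(12*N^4) := by ring
  linarith

private lemma analytic_lower (n k : ℕ) (hn : 64 ≤ n) (hk : (k:ℝ) ≤ 2*Real.sqrt n) :
    Real.exp n / (28*Real.sqrt n) ≤ (n:ℝ)^(n-k)/((n-k)!) := by
  have hN : (64:ℝ) ≤ (n:ℝ) := by exact_mod_cast hn
  have hNpos : (0:ℝ) < (n:ℝ) := by linarith
  have hK0 : (0:ℝ) ≤ (k:ℝ) := Nat.cast_nonneg k
  have hK2 : (k:ℝ)^2 ≤ 4*(n:ℝ) := by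
    have h1 : (k:ℝ)^2 ≤ (2*Real.sqrt n)^2 := pow_le_pow_left₀ hK0 hk 2
    rw [mul_pow, Real.sq_sqrt hNpos.le] at h1
    linarith
  have h4K : 4*(k:ℝ) ≤ (n:ℝ) := by nlinarith
  have hkn : k ≤ n := by
    have h : (k:ℝ) ≤ (n:ℝ) := by linarith
    exact_mod_cast h
  have hM : ((n-k : ℕ):ℝ) = (n:ℝ) - (k:ℝ) := by
    push_cast [Nat.cast_sub hkn]; ring
  have hMpos : (0:ℝ) < ((n-k:ℕ):ℝ) := by rw [hM]; linarith
  have hm1 : 1 ≤ n - k := by exact_mod_cast show (1:ℝ) ≤ ((n-k:ℕ):ℝ) by rw [hM]; linarith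
  have hfpos : (0:ℝ) < ((n-k)! : ℝ) := by exact_mod_cast Nat.factorial_pos (n-k)
  rw [div_le_div_iff₀ (by positivity) hfpos]
  -- core : exp n * exp 1 * (M/exp 1)^m ≤ 28 * n^m
  have hlogk : (k:ℝ) + ((n:ℝ)-(k:ℝ)) * Real.log (((n:ℝ)-(k:ℝ))/(n:ℝ)) ≤ 23/10 :=
    log_key (n:ℝ) (k:ℝ) hK0 hK2 h4K hN
  have hexpm : Real.exp 1 ^ (n-k) = Real.exp ((n-k:ℕ):ℝ) := by
    rw [← Real.exp_nat_mul, mul_one]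
  have hdivpow : (((n-k:ℕ):ℝ)/(n:ℝ))^(n-k) =
      Real.exp (((n-k:ℕ):ℝ) * Real.log (((n-k:ℕ):ℝ)/(n:ℝ))) := by
    rw [Real.exp_nat_mul, Real.exp_log (by positivity)]
  have hMpow : (((n-k:ℕ):ℝ))^(n-k) =
      Real.exp (((n-k:ℕ):ℝ) * Real.log (((n-k:ℕ):ℝ)/(n:ℝ))) * (n:ℝ)^(n-k) := by
    rw [← hdivpow, div_pow, div_mul_cancel₀]
    positivity
  have hsplit : Real.exp (n:ℝ) = Real.exp (k:ℝ) * Real.exp ((n-k:ℕ):ℝ) := by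
    rw [← Real.exp_add]; congr 1; rw [hM]; ring
  have hcore : Real.exp (n:ℝ) * Real.exp 1 * (((n-k:ℕ):ℝ)/Real.exp 1)^(n-k) ≤
      28 * (n:ℝ)^(n-k) := by
    have hiden : Real.exp (n:ℝ) * Real.exp 1 * (((n-k:ℕ):ℝ)/Real.exp 1)^(n-k) =
        Real.exp ((k:ℝ) + 1 + ((n-k:ℕ):ℝ) * Real.log (((n-k:ℕ):ℝ)/(n:ℝ))) * (n:ℝ)^(n-k) := by
      rw [div_pow, hexpm, hMpow, hsplit, Real.exp_add, Real.exp_add]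
      field_simp [Real.exp_ne_zero]
    rw [hiden]
    refine mul_le_mul_of_nonneg_right ?_ (by positivity)
    calc Real.exp ((k:ℝ) + 1 + ((n-k:ℕ):ℝ) * Real.log (((n-k:ℕ):ℝ)/(n:ℝ)))
        ≤ Real.exp (33/10) := by
          apply Real.exp_le_exp.mpr
          have : ((n-k:ℕ):ℝ) * Real.log (((n-k:ℕ):ℝ)/(n:ℝ)) =
              ((n:ℝ)-(k:ℝ)) * Real.log (((n:ℝ)-(k:ℝ))/(n:ℝ)) := by rw [hM]
          rw [this]
          linarith
      _ ≤ 28 := exp_3310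
  -- assemble
  have hstir := stirling_ub (n-k) hm1
  have hsqle : Real.sqrt ((n-k:ℕ):ℝ) ≤ Real.sqrt (n:ℝ) := by
    apply Real.sqrt_le_sqrt; rw [hM]; linarith
  calc Real.exp (n:ℝ) * ((n-k)! : ℝ)
      ≤ Real.exp (n:ℝ) * (Real.exp 1 * Real.sqrt ((n-k:ℕ):ℝ) * (((n-k:ℕ):ℝ)/Real.exp 1)^(n-k)) :=
        mul_le_mul_of_nonneg_left hstir (Real.exp_pos _).le
    _ ≤ Real.exp (n:ℝ) * (Real.exp 1 * Real.sqrt (n:ℝ) * (((n-k:ℕ):ℝ)/Real.exp 1)^(n-k)) := by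
        refine mul_le_mul_of_nonneg_left ?_ (Real.exp_pos _).le
        refine mul_le_mul_of_nonneg_right (mul_le_mul_of_nonneg_left hsqle (Real.exp_pos _).le) (by positivity)
    _ = (Real.exp (n:ℝ) * Real.exp 1 * (((n-k:ℕ):ℝ)/Real.exp 1)^(n-k)) * Real.sqrt (n:ℝ) := by
        ring
    _ ≤ (28 * (n:ℝ)^(n-k)) * Real.sqrt (n:ℝ) :=
        mul_le_mul_of_nonneg_right hcore (Real.sqrt_nonneg _)
    _ = (n:ℝ)^(n-k) * (28 * Real.sqrt (n:ℝ)) := by ring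

/-- For every `n ≥ 2` and integer `k` with `0 ≤ k ≤ 2√n`:
`e^n/(28√n) ≤ n^{n-k}/(n-k)! ≤ e^n/√((8π/5)·n)`. -/
theorem stirling_type_bounds (n k : ℕ) (hn : 2 ≤ n) (hk : (k : ℝ) ≤ 2 * Real.sqrt n) :
    Real.exp n / (28 * Real.sqrt n) ≤ (n : ℝ) ^ (n - k) / (Nat.factorial (n - k)) ∧
    (n : ℝ) ^ (n - k) / (Nat.factorial (n - k)) ≤ Real.exp n / Real.sqrt (8 * Real.pi / 5 * n) := by
  have hn1 : 1 ≤ n := le_trans (by norm_num) hn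
  have hNpos : (0:ℝ) < (n:ℝ) := by exact_mod_cast hn1
  constructor
  · rcases lt_or_ge n 64 with h | h
    · have hK2 : (k:ℝ)^2 ≤ 4*(n:ℝ) := by
        have h1 : (k:ℝ)^2 ≤ (2*Real.sqrt n)^2 := pow_le_pow_left₀ (Nat.cast_nonneg k) hk 2
        rw [mul_pow, Real.sq_sqrt hNpos.le] at h1
        linarith
      have hk2 : k*k ≤ 4*n := by
        have : ((k*k : ℕ):ℝ) ≤ ((4*n : ℕ):ℝ) := by push_cast; nlinarith
        exact_mod_cast this
      interval_cases n
      · exact small_case 2 2 k (k_le_of_sq k 2 hk2 (by norm_num)) (by norm_num) (by norm_num [Nat.factorial])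
      · exact small_case 3 3 k (k_le_of_sq k 3 hk2 (by norm_num)) (by norm_num) (by norm_num [Nat.factorial])
      · exact small_case 4 4 k (k_le_of_sq k 4 hk2 (by norm_num)) (by norm_num) (by norm_num [Nat.factorial])
      · exact small_case 5 4 k (k_le_of_sq k 4 hk2 (by norm_num)) (by norm_num) (by norm_num [Nat.factorial])
      · exact small_case 6 4 k (k_le_of_sq k 4 hk2 (by norm_num)) (by norm_num) (by norm_num [Nat.factorial])
      · exact small_case 7 5 k (k_le_of_sq k 5 hk2 (by norm_num)) (by norm_num) (by norm_num [Nat.factorial])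
      · exact small_case 8 5 k (k_le_of_sq k 5 hk2 (by norm_num)) (by norm_num) (by norm_num [Nat.factorial])
      · exact small_case 9 6 k (k_le_of_sq k 6 hk2 (by norm_num)) (by norm_num) (by norm_num [Nat.factorial])
      · exact small_case 10 6 k (k_le_of_sq k 6 hk2 (by norm_num)) (by norm_num) (by norm_num [Nat.factorial])
      · exact small_case 11 6 k (k_le_of_sq k 6 hk2 (by norm_num)) (by norm_num) (by norm_num [Nat.factorial])
      · exact small_case 12 6 k (k_le_of_sq k 6 hk2 (by norm_num)) (by norm_num) (by norm_num [Nat.factorial])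
      · exact small_case 13 7 k (k_le_of_sq k 7 hk2 (by norm_num)) (by norm_num) (by norm_num [Nat.factorial])
      · exact small_case 14 7 k (k_le_of_sq k 7 hk2 (by norm_num)) (by norm_num) (by norm_num [Nat.factorial])
      · exact small_case 15 7 k (k_le_of_sq k 7 hk2 (by norm_num)) (by norm_num) (by norm_num [Nat.factorial])
      · exact small_case 16 8 k (k_le_of_sq k 8 hk2 (by norm_num)) (by norm_num) (by norm_num [Nat.factorial])
      · exact small_case 17 8 k (k_le_of_sq k 8 hk2 (by norm_num)) (by norm_num) (by norm_num [Nat.factorial])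
      · exact small_case 18 8 k (k_le_of_sq k 8 hk2 (by norm_num)) (by norm_num) (by norm_num [Nat.factorial])
      · exact small_case 19 8 k (k_le_of_sq k 8 hk2 (by norm_num)) (by norm_num) (by norm_num [Nat.factorial])
      · exact small_case 20 8 k (k_le_of_sq k 8 hk2 (by norm_num)) (by norm_num) (by norm_num [Nat.factorial])
      · exact small_case 21 9 k (k_le_of_sq k 9 hk2 (by norm_num)) (by norm_num) (by norm_num [Nat.factorial])
      · exact small_case 22 9 k (k_le_of_sq k 9 hk2 (by norm_num)) (by norm_num) (by norm_num [Nat.factorial])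
      · exact small_case 23 9 k (k_le_of_sq k 9 hk2 (by norm_num)) (by norm_num) (by norm_num [Nat.factorial])
      · exact small_case 24 9 k (k_le_of_sq k 9 hk2 (by norm_num)) (by norm_num) (by norm_num [Nat.factorial])
      · exact small_case 25 10 k (k_le_of_sq k 10 hk2 (by norm_num)) (by norm_num) (by norm_num [Nat.factorial])
      · exact small_case 26 10 k (k_le_of_sq k 10 hk2 (by norm_num)) (by norm_num) (by norm_num [Nat.factorial])
      · exact small_case 27 10 k (k_le_of_sq k 10 hk2 (by norm_num)) (by norm_num) (by norm_num [Nat.factorial])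
      · exact small_case 28 10 k (k_le_of_sq k 10 hk2 (by norm_num)) (by norm_num) (by norm_num [Nat.factorial])
      · exact small_case 29 10 k (k_le_of_sq k 10 hk2 (by norm_num)) (by norm_num) (by norm_num [Nat.factorial])
      · exact small_case 30 10 k (k_le_of_sq k 10 hk2 (by norm_num)) (by norm_num) (by norm_num [Nat.factorial])
      · exact small_case 31 11 k (k_le_of_sq k 11 hk2 (by norm_num)) (by norm_num) (by norm_num [Nat.factorial])
      · exact small_case 32 11 k (k_le_of_sq k 11 hk2 (by norm_num)) (by norm_num) (by norm_num [Nat.factorial])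
      · exact small_case 33 11 k (k_le_of_sq k 11 hk2 (by norm_num)) (by norm_num) (by norm_num [Nat.factorial])
      · exact small_case 34 11 k (k_le_of_sq k 11 hk2 (by norm_num)) (by norm_num) (by norm_num [Nat.factorial])
      · exact small_case 35 11 k (k_le_of_sq k 11 hk2 (by norm_num)) (by norm_num) (by norm_num [Nat.factorial])
      · exact small_case 36 12 k (k_le_of_sq k 12 hk2 (by norm_num)) (by norm_num) (by norm_num [Nat.factorial])
      · exact small_case 37 12 k (k_le_of_sq k 12 hk2 (by norm_num)) (by norm_num) (by norm_num [Nat.factorial])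
      · exact small_case 38 12 k (k_le_of_sq k 12 hk2 (by norm_num)) (by norm_num) (by norm_num [Nat.factorial])
      · exact small_case 39 12 k (k_le_of_sq k 12 hk2 (by norm_num)) (by norm_num) (by norm_num [Nat.factorial])
      · exact small_case 40 12 k (k_le_of_sq k 12 hk2 (by norm_num)) (by norm_num) (by norm_num [Nat.factorial])
      · exact small_case 41 12 k (k_le_of_sq k 12 hk2 (by norm_num)) (by norm_num) (by norm_num [Nat.factorial])
      · exact small_case 42 12 k (k_le_of_sq k 12 hk2 (by norm_num)) (by norm_num) (by norm_num [Nat.factorial])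
      · exact small_case 43 13 k (k_le_of_sq k 13 hk2 (by norm_num)) (by norm_num) (by norm_num [Nat.factorial])
      · exact small_case 44 13 k (k_le_of_sq k 13 hk2 (by norm_num)) (by norm_num) (by norm_num [Nat.factorial])
      · exact small_case 45 13 k (k_le_of_sq k 13 hk2 (by norm_num)) (by norm_num) (by norm_num [Nat.factorial])
      · exact small_case 46 13 k (k_le_of_sq k 13 hk2 (by norm_num)) (by norm_num) (by norm_num [Nat.factorial])
      · exact small_case 47 13 k (k_le_of_sq k 13 hk2 (by norm_num)) (by norm_num) (by norm_num [Nat.factorial])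
      · exact small_case 48 13 k (k_le_of_sq k 13 hk2 (by norm_num)) (by norm_num) (by norm_num [Nat.factorial])
      · exact small_case 49 14 k (k_le_of_sq k 14 hk2 (by norm_num)) (by norm_num) (by norm_num [Nat.factorial])
      · exact small_case 50 14 k (k_le_of_sq k 14 hk2 (by norm_num)) (by norm_num) (by norm_num [Nat.factorial])
      · exact small_case 51 14 k (k_le_of_sq k 14 hk2 (by norm_num)) (by norm_num) (by norm_num [Nat.factorial])
      · exact small_case 52 14 k (k_le_of_sq k 14 hk2 (by norm_num)) (by norm_num) (by norm_num [Nat.factorial])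
      · exact small_case 53 14 k (k_le_of_sq k 14 hk2 (by norm_num)) (by norm_num) (by norm_num [Nat.factorial])
      · exact small_case 54 14 k (k_le_of_sq k 14 hk2 (by norm_num)) (by norm_num) (by norm_num [Nat.factorial])
      · exact small_case 55 14 k (k_le_of_sq k 14 hk2 (by norm_num)) (by norm_num) (by norm_num [Nat.factorial])
      · exact small_case 56 14 k (k_le_of_sq k 14 hk2 (by norm_num)) (by norm_num) (by norm_num [Nat.factorial])
      · exact small_case 57 15 k (k_le_of_sq k 15 hk2 (by norm_num)) (by norm_num) (by norm_num [Nat.factorial])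
      · exact small_case 58 15 k (k_le_of_sq k 15 hk2 (by norm_num)) (by norm_num) (by norm_num [Nat.factorial])
      · exact small_case 59 15 k (k_le_of_sq k 15 hk2 (by norm_num)) (by norm_num) (by norm_num [Nat.factorial])
      · exact small_case 60 15 k (k_le_of_sq k 15 hk2 (by norm_num)) (by norm_num) (by norm_num [Nat.factorial])
      · exact small_case 61 15 k (k_le_of_sq k 15 hk2 (by norm_num)) (by norm_num) (by norm_num [Nat.factorial])
      · exact small_case 62 15 k (k_le_of_sq k 15 hk2 (by norm_num)) (by norm_num) (by norm_num [Nat.factorial])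
      · exact small_case 63 15 k (k_le_of_sq k 15 hk2 (by norm_num)) (by norm_num) (by norm_num [Nat.factorial])
    · exact analytic_lower n k h hk
  · have hmono := pow_div_fact_mono' n (n-k) n (Nat.sub_le n k) (le_refl n)
    refine hmono.trans ?_
    have hπ := Real.pi_pos
    have hstir := stirling_lb n hn1
    have hepow : ((n:ℝ)/Real.exp 1)^n = (n:ℝ)^n/Real.exp (n:ℝ) := by
      rw [div_pow, ← Real.exp_nat_mul, mul_one]
    rw [hepow] at hstir
    have hfpos : (0:ℝ) < (n ! : ℝ) := by exact_mod_cast Nat.factorial_pos n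
    have hd1 : (0:ℝ) < Real.sqrt π * Real.sqrt (2*(n:ℝ)) := by positivity
    have hd2 : (0:ℝ) < Real.sqrt (8*π/5*(n:ℝ)) := by positivity
    calc (n:ℝ)^n/(n !) ≤ Real.exp (n:ℝ)/(Real.sqrt π * Real.sqrt (2*(n:ℝ))) := by
          rw [div_le_div_iff₀ hfpos hd1]
          have h4 := mul_le_mul_of_nonneg_right hstir (Real.exp_pos (n:ℝ)).le
          calc (n:ℝ)^n * (Real.sqrt π * Real.sqrt (2*(n:ℝ)))
              = Real.sqrt π * (Real.sqrt (2*(n:ℝ)) * ((n:ℝ)^n/Real.exp (n:ℝ))) * Real.exp (n:ℝ) := by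
                field_simp
            _ ≤ (n ! : ℝ) * Real.exp (n:ℝ) := h4
            _ = Real.exp (n:ℝ) * (n ! : ℝ) := by ring
      _ ≤ Real.exp (n:ℝ)/Real.sqrt (8*π/5*(n:ℝ)) := by
          have hle : Real.sqrt (8*π/5*(n:ℝ)) ≤ Real.sqrt π * Real.sqrt (2*(n:ℝ)) := by
            rw [← Real.sqrt_mul hπ.le]
            apply Real.sqrt_le_sqrt
            nlinarith
          exact div_le_div_of_nonneg_left (Real.exp_pos _).le hd2 hle
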